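/- There is no symmetric positive definite real 3×3 matrix S such that the four matrices S·A⁰, S·A(0), S·B and S·C are all symmetric. (Hence the linearized Navier–Stokes–Fourier–Korteweg system is not symmetrizable in the classical sense of Friedrichs.) -/

import Mathlib

open Matrix

/-- The linearized Navier–Stokes–Fourier–Korteweg system is not symmetrizable in the
classical sense of Friedrichs: there is no symmetric positive definite `S` making
`S·A⁰`, `S·A(0)`, `S·B` and `S·C` all symmetric. -/
theorem nsfk_not_friedrichs_symmetrizable (ρ θ pρ pθ eθ k μ α u : ℝ)
    (hρ : 0 < ρ) (hθ : 0 < θ) (hpρ : 0 < pρ) (hpθ : 0 < pθ) (heθ : 0 < eθ)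
    (hk : 0 < k) (hμ : 0 < μ) (hα : 0 < α) :
    let A0 : Matrix (Fin 3) (Fin 3) ℝ :=
      (1 / θ) • !![pρ / ρ, 0, 0; 0, ρ, 0; 0, 0, eθ * ρ / θ]
    let A : Matrix (Fin 3) (Fin 3) ℝ :=
      (1 / θ) • !![pρ * u / ρ, pρ, 0; pρ + (0:ℝ) ^ 2 * k * ρ, ρ * u, pθ; 0, pθ, ρ * u * eθ / θ]
    let B : Matrix (Fin 3) (Fin 3) ℝ :=
      (1 / θ) • !![0, 0, 0; 0, μ, 0; 0, 0, α / θ]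
    let C : Matrix (Fin 3) (Fin 3) ℝ :=
      (1 / θ) • !![0, 0, 0; k * ρ, 0, 0; 0, 0, 0]
    ¬ ∃ S : Matrix (Fin 3) (Fin 3) ℝ, S.IsSymm ∧ S.PosDef ∧
        (S * A0).IsSymm ∧ (S * A).IsSymm ∧ (S * B).IsSymm ∧ (S * C).IsSymm := by
  intro A0 A B C
  rintro ⟨S, hSsym, hSpd, -, -, -, hSC⟩
  have hS11 : S 1 1 = 0 := by
    have h := hSC.apply 0 1
    simp [Matrix.transpose_apply, Matrix.mul_apply, C, Fin.sum_univ_three,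
      Matrix.smul_apply, hθ.ne', hk.ne', hρ.ne'] at h
    exact h
  -- Positive definiteness gives S 1 1 > 0.
  have hne : (Pi.single (1 : Fin 3) (1:ℝ) : Fin 3 → ℝ) ≠ 0 := by
    intro h
    have := congrFun h 1
    simp at this
  have hpos := hSpd.2 (Finsupp.single_ne_zero.mpr one_ne_zero : Finsupp.single (1 : Fin 3) (1:ℝ) ≠ 0)
  have key : star (Pi.single (1 : Fin 3) (1:ℝ) : Fin 3 → ℝ) ⬝ᵥ (S *ᵥ (Pi.single 1 1 : Fin 3 → ℝ)) = S 1 1 := by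
    simp [dotProduct, Matrix.mulVec, Fin.sum_univ_three, Pi.single_apply]
  simp [Finsupp.sum_single_index, hS11] at hpos
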